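/- arXiv:2312.00302 — 2 statements merged into one kernel-verified Lean document; each statement's English description precedes it below -/
import Mathlib

section
/- Let n ≥ 1. In the polynomial ring ℤ[X₀, …, X_{n−1}] (MvPolynomial (Fin n) ℤ), let I be the ideal generated by the polynomials Xᵢ² − (2·Xᵢ + X_{i+1}) for 0 ≤ i ≤ n−2 together with X_{n−1}². Then for every polynomial f ∈ ℤ[X₀, …, X_{n−1}] there exists a multilinear polynomial g (i.e., every monomial in the support of g has every exponent at most 1) such that f − g ∈ I. -/
open MvPolynomial

/-- The generators of the ideal `I`: `Xᵢ² − (2Xᵢ + X_{i+1})` for `i ≤ n-2`, and `X_{n-1}²`. -/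
noncomputable def gens (n : ℕ) : Fin n → MvPolynomial (Fin n) ℤ := fun i =>
  if h : (i : ℕ) + 1 < n then X i ^ 2 - (2 * X i + X ⟨(i : ℕ) + 1, h⟩) else X i ^ 2

/-- The submodule of multilinear polynomials. -/
noncomputable def ML (n : ℕ) : Submodule ℤ (MvPolynomial (Fin n) ℤ) where
  carrier := {p | ∀ m ∈ p.support, ∀ i : Fin n, m i ≤ 1}
  add_mem' := by
    intro a b ha hb m hm i
    rcases Finset.mem_union.mp (MvPolynomial.support_add hm) with h | h
    · exact ha m h i
    · exact hb m h i
  zero_mem' := by intro m hm; simp at hm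
  smul_mem' := by
    intro c a ha m hm i
    exact ha m (MvPolynomial.support_smul hm) i

/-- Weight function: replacing Xᵢ² by 2Xᵢ + X_{i+1} strictly decreases it. -/
def w (n : ℕ) (m : Fin n →₀ ℕ) : ℕ := ∑ i : Fin n, m i * 3 ^ (n - 1 - (i : ℕ))

lemma w_add (n : ℕ) (a b : Fin n →₀ ℕ) : w n (a + b) = w n a + w n b := by
  simp [w, Finsupp.add_apply, add_mul, Finset.sum_add_distrib]

lemma w_single (n : ℕ) (j : Fin n) (c : ℕ) :
    w n (Finsupp.single j c) = c * 3 ^ (n - 1 - (j : ℕ)) := by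
  rw [w, Finset.sum_eq_single j]
  · simp
  · intro b _ hb
    simp [Finsupp.single_apply, Ne.symm hb]
  · simp

noncomputable abbrev Msub (n : ℕ) : Submodule ℤ (MvPolynomial (Fin n) ℤ) :=
  ML n ⊔ (Ideal.span (Set.range (gens n))).restrictScalars ℤ

lemma mono_mem (n : ℕ) : ∀ k (m : Fin n →₀ ℕ), w n m ≤ k →
    (monomial m (1 : ℤ)) ∈ Msub n := by
  intro k
  induction k using Nat.strong_induction_on with
  | _ k IH =>
  intro m hm
  by_cases hml : ∀ i : Fin n, m i ≤ 1
  · apply Submodule.mem_sup_left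
    intro s hs i
    rw [MvPolynomial.support_monomial, if_neg one_ne_zero] at hs
    simp at hs
    subst hs
    exact hml i
  · push_neg at hml
    obtain ⟨i, hi⟩ := hml
    set m' : Fin n →₀ ℕ := m - Finsupp.single i 2 with hm'def
    have hm' : m' + Finsupp.single i 2 = m := by
      ext j
      rcases eq_or_ne j i with rfl | hj
      · simp [hm'def, Finsupp.tsub_apply]
        omega
      · simp [hm'def, Finsupp.tsub_apply, Finsupp.single_apply, Ne.symm hj]
    have key : monomial m (1 : ℤ) = monomial m' 1 * X i ^ 2 := by
      rw [X_pow_eq_monomial, monomial_mul, mul_one, hm']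
    have hX : ∀ j : Fin n, monomial (m' + Finsupp.single j 1) (1 : ℤ) = monomial m' 1 * X j := by
      intro j
      rw [X, monomial_mul, mul_one]
    have hwm : w n m = w n m' + 2 * 3 ^ (n - 1 - (i : ℕ)) := by
      rw [← hm', w_add, w_single]
    have h3 : 0 < 3 ^ (n - 1 - (i : ℕ)) := Nat.pow_pos (by norm_num)
    have hIgen : monomial m' (1 : ℤ) * gens n i ∈
        (Ideal.span (Set.range (gens n))).restrictScalars ℤ := by
      exact Ideal.mul_mem_left _ _ (Ideal.subset_span ⟨i, rfl⟩)
    have hwi : w n (m' + Finsupp.single i 1) < k := by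
      rw [w_add, w_single]
      omega
    by_cases hlt : (i : ℕ) + 1 < n
    · have hg : gens n i = X i ^ 2 - (2 * X i + X ⟨(i : ℕ) + 1, hlt⟩) := by
        simp [gens, hlt]
      have e1 : monomial m (1 : ℤ) =
          monomial m' 1 * gens n i + (monomial m' 1 * X i + monomial m' 1 * X i
            + monomial m' 1 * X ⟨(i : ℕ) + 1, hlt⟩) := by
        rw [key, hg]; ring
      rw [e1]
      have hwj : w n (m' + Finsupp.single (⟨(i : ℕ) + 1, hlt⟩ : Fin n) 1) < k := by
        rw [w_add, w_single]
        have hcoe : ((⟨(i : ℕ) + 1, hlt⟩ : Fin n) : ℕ) = (i : ℕ) + 1 := rfl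
        rw [hcoe]
        have hle : 3 ^ (n - 1 - ((i : ℕ) + 1)) ≤ 3 ^ (n - 1 - (i : ℕ)) :=
          Nat.pow_le_pow_right (by norm_num) (by omega)
        omega
      have t1 : monomial m' (1 : ℤ) * X i ∈ Msub n := by
        rw [← hX]
        exact IH _ hwi _ le_rfl
      have t2 : monomial m' (1 : ℤ) * X ⟨(i : ℕ) + 1, hlt⟩ ∈ Msub n := by
        rw [← hX]
        exact IH _ hwj _ le_rfl
      exact add_mem (Submodule.mem_sup_right hIgen) (add_mem (add_mem t1 t1) t2)
    · have hg : gens n i = X i ^ 2 := by simp [gens, hlt]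
      have e1 : monomial m (1 : ℤ) = monomial m' 1 * gens n i := by rw [key, hg]
      rw [e1]
      exact Submodule.mem_sup_right hIgen

theorem stmt0 (n : ℕ) (hn : 1 ≤ n) (f : MvPolynomial (Fin n) ℤ) :
    ∃ g : MvPolynomial (Fin n) ℤ,
      (∀ m ∈ g.support, ∀ i : Fin n, m i ≤ 1) ∧
      f - g ∈ Ideal.span (Set.range (gens n)) := by
  have hf : f ∈ Msub n := by
    rw [← MvPolynomial.support_sum_monomial_coeff f]
    apply Submodule.sum_mem
    intro m _
    have : (monomial m (coeff m f) : MvPolynomial (Fin n) ℤ) =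
        (coeff m f) • monomial m 1 := by
      rw [MvPolynomial.smul_monomial, smul_eq_mul, mul_one]
    rw [this]
    exact Submodule.smul_mem _ _ (mono_mem n (w n m) m le_rfl)
  obtain ⟨g, hg, h, hh, hgh⟩ := Submodule.mem_sup.mp hf
  refine ⟨g, hg, ?_⟩
  have : f - g = h := by rw [← hgh]; ring
  rw [this]
  exact hh
end

section
/- Let n ≥ 1. In ℤ[X₀, …, X_{n−1}], let I be the ideal generated by Xᵢ² − (2·Xᵢ + X_{i+1}) for 0 ≤ i ≤ n−2 together with X_{n−1}². If g is a multilinear polynomial (every exponent in every monomial of its support is at most 1) and g ∈ I, then g = 0. Consequently the multilinear representative of any residue class modulo I is unique. -/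
open MvPolynomial Polynomial

noncomputable def FF : ℕ → Polynomial ℤ
  | 0 => Polynomial.X
  | (i+1) => FF i ^ 2 - 2 * FF i

lemma FF_monic (i : ℕ) : (FF i).Monic ∧ (FF i).natDegree = 2 ^ i := by
  induction i with
  | zero => exact ⟨monic_X, natDegree_X⟩
  | succ i ih =>
    obtain ⟨hm, hd⟩ := ih
    have h2 : (FF i ^ 2).Monic := hm.pow 2
    have hdeg2 : (FF i ^ 2).natDegree = 2 ^ (i+1) := by
      rw [Polynomial.natDegree_pow, hd]; ring
    have hlt : (-(2 * FF i)).degree < (FF i ^ 2).degree := by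
      apply lt_of_le_of_lt (degree_neg _).le
      have h1 : (2 * FF i).natDegree ≤ 2 ^ i := by
        calc (2 * FF i).natDegree ≤ (2 : Polynomial ℤ).natDegree + (FF i).natDegree :=
          natDegree_mul_le
        _ ≤ 2 ^ i := by simp [hd]
      apply lt_of_le_of_lt (Polynomial.degree_le_natDegree)
      have h3 : ((2 * FF i).natDegree : WithBot ℕ) ≤ ((2 ^ i : ℕ) : WithBot ℕ) := by
        exact_mod_cast h1
      apply lt_of_le_of_lt h3
      rw [degree_eq_natDegree h2.ne_zero, hdeg2]
      exact_mod_cast Nat.pow_lt_pow_right one_lt_two (Nat.lt_succ_self i)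
    have hmon : (FF i ^ 2 + -(2 * FF i)).Monic := h2.add_of_left hlt
    have hdeg : (FF i ^ 2 + -(2 * FF i)).natDegree = 2 ^ (i+1) := by
      rw [natDegree_eq_of_degree_eq (degree_add_eq_left_of_degree_lt hlt), hdeg2]
    exact ⟨by rwa [show FF (i+1) = FF i ^ 2 + -(2*FF i) by rw [FF]; ring],
      by rw [show FF (i+1) = FF i ^ 2 + -(2*FF i) by rw [FF]; ring]; exact hdeg⟩

lemma sum_range_two_pow (n : ℕ) : ∑ j ∈ Finset.range n, 2 ^ j = 2 ^ n - 1 := by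
  induction n with
  | zero => simp
  | succ k ih =>
    rw [Finset.sum_range_succ, ih]
    have h1 := Nat.one_le_two_pow (n := k)
    rw [pow_succ]
    omega

lemma sum_two_pow_inj {s t : Finset ℕ} (h : ∑ i ∈ s, 2 ^ i = ∑ i ∈ t, 2 ^ i) : s = t := by
  have hs := Nat.bitIndices_twoPowsum (Finset.sortedLT_sort s)
  have ht := Nat.bitIndices_twoPowsum (Finset.sortedLT_sort t)
  have es : ((s.sort (· ≤ ·)).map (fun i => 2 ^ i)).sum = ∑ i ∈ s, 2 ^ i :=
    (((Finset.sort_perm_toList s (· ≤ ·))).map _).sum_eq.trans (Finset.sum_map_toList s _)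
  have et : ((t.sort (· ≤ ·)).map (fun i => 2 ^ i)).sum = ∑ i ∈ t, 2 ^ i :=
    (((Finset.sort_perm_toList t (· ≤ ·))).map _).sum_eq.trans (Finset.sum_map_toList t _)
  rw [es, h, ← et, ht] at hs
  ext a
  rw [← Finset.mem_sort (· ≤ ·), ← hs, Finset.mem_sort]

section main
variable (n : ℕ)

/-- degree weight of an exponent -/
def dm (m : Fin n →₀ ℕ) : ℕ := ∑ i ∈ m.support, 2 ^ (i : ℕ)

lemma dm_inj {m m' : Fin n →₀ ℕ} (hm : ∀ i, m i ≤ 1) (hm' : ∀ i, m' i ≤ 1)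
    (h : dm n m = dm n m') : m = m' := by
  have h1 : ∑ j ∈ m.support.image Fin.val, 2 ^ j = ∑ j ∈ m'.support.image Fin.val, 2 ^ j := by
    rw [Finset.sum_image (fun a _ b _ hab => Fin.val_injective hab),
      Finset.sum_image (fun a _ b _ hab => Fin.val_injective hab)]
    exact h
  have h2 := sum_two_pow_inj h1
  have h3 : m.support = m'.support :=
    Finset.image_injective Fin.val_injective h2
  ext i
  by_cases hi : i ∈ m.support
  · have hi' : i ∈ m'.support := h3 ▸ hi
    have := Finsupp.mem_support_iff.1 hi
    have := Finsupp.mem_support_iff.1 hi'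
    have := hm i; have := hm' i; omega
  · have hi' : i ∉ m'.support := h3 ▸ hi
    simp only [Finsupp.notMem_support_iff] at hi hi'
    rw [hi, hi']

end main

theorem stmt1 (n : ℕ) (hn : 1 ≤ n) (g : MvPolynomial (Fin n) ℤ)
    (hml : ∀ m ∈ g.support, ∀ i : Fin n, m i ≤ 1)
    (hg : g ∈ Ideal.span (Set.range (gens n))) :
    g = 0 := by
  by_contra hne
  set φ : MvPolynomial (Fin n) ℤ →ₐ[ℤ] Polynomial ℤ :=
    MvPolynomial.aeval (fun i : Fin n => FF (i : ℕ)) with hφ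
  -- image of generators
  have hgen : ∀ i : Fin n, φ (gens n i) ∈ Ideal.span {FF (n-1) ^ 2} := by
    intro i
    rw [gens]
    split_ifs with h
    · have : φ (X i ^ 2 - (2 * X i + X ⟨(i : ℕ) + 1, h⟩)) = 0 := by
        have hF : FF ((i : ℕ) + 1) = FF (i : ℕ) ^ 2 - 2 * FF (i : ℕ) := rfl
        simp only [map_sub, map_add, map_mul, map_pow, map_ofNat, MvPolynomial.aeval_X, hφ,
          Fin.val_mk, hF]
        ring
      rw [this]; exact Ideal.zero_mem _
    · have hi : (i : ℕ) = n - 1 := by have := i.isLt; omega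
      have : φ (X i ^ 2) = FF (n-1) ^ 2 := by
        simp [hφ, hi]
      rw [this]
      exact Ideal.subset_span rfl
  -- φ g is divisible by FF (n-1) ^ 2
  have hdvd : FF (n-1) ^ 2 ∣ φ g := by
    rw [← Ideal.mem_span_singleton]
    have h1 : φ g ∈ Ideal.map φ.toRingHom (Ideal.span (Set.range (gens n))) :=
      Ideal.mem_map_of_mem _ hg
    rw [Ideal.map_span] at h1
    refine Ideal.span_le.2 ?_ h1
    rintro _ ⟨_, ⟨i, rfl⟩, rfl⟩
    exact hgen i
  -- φ g as a sum
  have hrep : φ g = ∑ m ∈ g.support, Polynomial.C (MvPolynomial.coeff m g) *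
      ∏ i ∈ m.support, FF (i : ℕ) := by
    conv_lhs => rw [g.as_sum, map_sum]
    refine Finset.sum_congr rfl fun m hm => ?_
    rw [hφ, MvPolynomial.aeval_monomial, Polynomial.algebraMap_eq]
    congr 1
    rw [Finsupp.prod]
    refine Finset.prod_congr rfl fun i hi => ?_
    have h1 : m i = 1 := le_antisymm (hml m hm i) (Finsupp.mem_support_iff.1 hi).bot_lt
    rw [h1, pow_one]
  -- properties of the products
  have hQ : ∀ m : Fin n →₀ ℕ, (∏ i ∈ m.support, FF (i : ℕ)).Monic ∧
      (∏ i ∈ m.support, FF (i : ℕ)).natDegree = dm n m := by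
    intro m
    have hmon : (∏ i ∈ m.support, FF (i : ℕ)).Monic :=
      monic_prod_of_monic _ _ fun i _ => (FF_monic i).1
    refine ⟨hmon, ?_⟩
    rw [Polynomial.natDegree_prod _ _ (fun (i : Fin n) _ => (FF_monic i.1).1.ne_zero)]
    exact Finset.sum_congr rfl fun i _ => (FF_monic (i:ℕ)).2
  -- φ g ≠ 0 : look at the top coefficient
  obtain ⟨m0, hm0, hmax⟩ := g.support.exists_max_image (dm n) (support_nonempty.2 hne)
  have hcoeff : (φ g).coeff (dm n m0) = MvPolynomial.coeff m0 g := by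
    rw [hrep, Polynomial.finset_sum_coeff]
    rw [Finset.sum_eq_single m0]
    · rw [Polynomial.coeff_C_mul, ← (hQ m0).2, (hQ m0).1.coeff_natDegree, mul_one]
    · intro m hm hne'
      have hlt : dm n m < dm n m0 := by
        refine lt_of_le_of_ne (hmax m hm) fun hEq => hne' ?_
        exact dm_inj n (hml m hm) (hml m0 hm0) hEq
      rw [Polynomial.coeff_C_mul, Polynomial.coeff_eq_zero_of_natDegree_lt ((hQ m).2 ▸ hlt),
        mul_zero]
    · intro h; exact absurd hm0 h
  have hφg : φ g ≠ 0 := by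
    intro h
    rw [h, Polynomial.coeff_zero] at hcoeff
    exact (MvPolynomial.mem_support_iff.1 hm0) hcoeff.symm
  -- degree bound
  have hbound : (φ g).natDegree ≤ 2 ^ n - 1 := by
    rw [hrep]
    refine Polynomial.natDegree_sum_le_of_forall_le _ _ fun m hm => ?_
    refine le_trans (Polynomial.natDegree_C_mul_le _ _) ?_
    rw [(hQ m).2]
    calc dm n m ≤ ∑ i : Fin n, 2 ^ (i : ℕ) :=
      Finset.sum_le_sum_of_subset (Finset.subset_univ _)
    _ = ∑ j ∈ Finset.range n, 2 ^ j := Fin.sum_univ_eq_sum_range _ _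
    _ = 2 ^ n - 1 := sum_range_two_pow n
  -- contradiction with divisibility
  have hdegq : (FF (n-1) ^ 2).natDegree = 2 ^ n := by
    rw [Polynomial.natDegree_pow, (FF_monic (n-1)).2, ← pow_succ']
    congr 1
    omega
  have := Polynomial.natDegree_le_of_dvd hdvd hφg
  rw [hdegq] at this
  have h1 : (1:ℕ) ≤ 2 ^ n := Nat.one_le_two_pow
  omega
end
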